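/- For w ∈ [1/3, 1], |ψ(w)| ≤ 2 − π²/9, where ψ(w) = (1−w)(e^{−2πiw} + e^{−4πiw}) + (1/(3πi))(1 − e^{−6πiw}). -/

import Mathlib

open Real

/-- The Fourier transform of the localizing function `φ` on `[0,1]`. -/
noncomputable def psi (w : ℝ) : ℂ :=
  (1 - (w : ℂ)) * (Complex.exp (-2 * (π : ℂ) * Complex.I * (w : ℂ)) +
      Complex.exp (-4 * (π : ℂ) * Complex.I * (w : ℂ))) +
    (1 / (3 * (π : ℂ) * Complex.I)) * (1 - Complex.exp (-6 * (π : ℂ) * Complex.I * (w : ℂ)))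

theorem abs_psi_le_on_tail (w : ℝ) (hw : w ∈ Set.Icc (1 / 3 : ℝ) 1) :
    ‖psi w‖ ≤ 2 - π ^ 2 / 9 := by
  obtain ⟨hw1, hw2⟩ := hw
  have hπ : (0:ℝ) < π := Real.pi_pos
  -- rewrite the exponential sum via cosine
  have key : Complex.exp (-2 * (π:ℂ) * Complex.I * w) + Complex.exp (-4 * (π:ℂ) * Complex.I * w)
      = Complex.exp (-3 * (π:ℂ) * Complex.I * w) * (2 * (Real.cos (π * w) : ℂ)) := by
    have a1 : (-2 * (π:ℂ) * Complex.I * w) = (-3 * (π:ℂ) * Complex.I * w) + ((π * w : ℝ) : ℂ) * Complex.I := by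
      push_cast; ring
    have a2 : (-4 * (π:ℂ) * Complex.I * w) = (-3 * (π:ℂ) * Complex.I * w) + -(((π * w : ℝ) : ℂ) * Complex.I) := by
      push_cast; ring
    rw [a1, a2, Complex.exp_add, Complex.exp_add, Complex.ofReal_cos, Complex.cos]
    ring
  have habs3 : ‖Complex.exp (-3 * (π:ℂ) * Complex.I * w)‖ = 1 := by
    have : (-3 * (π:ℂ) * Complex.I * w) = ((-3 * π * w : ℝ) : ℂ) * Complex.I := by
      push_cast; ring
    rw [this, Complex.norm_exp_ofReal_mul_I]
  have habs6 : ‖Complex.exp (-6 * (π:ℂ) * Complex.I * w)‖ = 1 := by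
    have : (-6 * (π:ℂ) * Complex.I * w) = ((-6 * π * w : ℝ) : ℂ) * Complex.I := by
      push_cast; ring
    rw [this, Complex.norm_exp_ofReal_mul_I]
  -- bound the first term
  have h1 : ‖(1 - (w : ℂ)) * (Complex.exp (-2 * (π : ℂ) * Complex.I * w) +
      Complex.exp (-4 * (π : ℂ) * Complex.I * w))‖ = (1 - w) * (2 * |Real.cos (π * w)|) := by
    rw [key, norm_mul, norm_mul, habs3, norm_mul, one_mul]
    have : (1 - (w:ℂ)) = ((1 - w : ℝ) : ℂ) := by push_cast; ring
    rw [this, Complex.norm_real, Complex.norm_real, Real.norm_eq_abs, Real.norm_eq_abs, abs_of_nonneg (by linarith : (0:ℝ) ≤ 1 - w)]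
    norm_num
  -- bound the second term
  have h2 : ‖(1 / (3 * (π:ℂ) * Complex.I)) * (1 - Complex.exp (-6 * (π:ℂ) * Complex.I * w))‖
      ≤ 1 / (3 * π) * 2 := by
    rw [norm_mul]
    have hc : ‖1 / (3 * (π:ℂ) * Complex.I)‖ = 1 / (3 * π) := by
      rw [norm_div, norm_one, norm_mul, norm_mul, Complex.norm_I, mul_one]
      norm_num [Complex.norm_real, abs_of_pos hπ]
    rw [hc]
    have : ‖1 - Complex.exp (-6 * (π:ℂ) * Complex.I * w)‖ ≤ 2 := by
      calc ‖1 - Complex.exp (-6 * (π:ℂ) * Complex.I * w)‖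
          ≤ ‖(1:ℂ)‖ + ‖Complex.exp (-6 * (π:ℂ) * Complex.I * w)‖ :=
            norm_sub_le _ _
        _ = 2 := by rw [norm_one, habs6]; norm_num
    have hpos : (0:ℝ) ≤ 1 / (3 * π) := by positivity
    nlinarith
  -- the cosine bound
  have hcos : (1 - w) * (2 * |Real.cos (π * w)|) ≤ 2 / 3 := by
    rcases le_or_gt w (2/3) with h | h
    · have hub : Real.cos (π * w) ≤ 1/2 := by
        have := Real.cos_le_cos_of_nonneg_of_le_pi (by positivity : (0:ℝ) ≤ π / 3)
          (by nlinarith : π * w ≤ π) (by nlinarith : π / 3 ≤ π * w)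
        rwa [Real.cos_pi_div_three] at this
      have hlb : -(1/2) ≤ Real.cos (π * w) := by
        have h23 : Real.cos (π - π/3) = -(1/2) := by
          rw [Real.cos_pi_sub, Real.cos_pi_div_three]
        have := Real.cos_le_cos_of_nonneg_of_le_pi (by positivity : (0:ℝ) ≤ π * w)
          (by nlinarith : π - π/3 ≤ π) (by nlinarith : π * w ≤ π - π/3)
        rw [h23] at this; linarith
      have habs : |Real.cos (π * w)| ≤ 1/2 := abs_le.2 ⟨hlb, hub⟩
      nlinarith [abs_nonneg (Real.cos (π * w))]
    · have habs : |Real.cos (π * w)| ≤ 1 := Real.abs_cos_le_one _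
      nlinarith [abs_nonneg (Real.cos (π * w))]
  -- combine
  have htri : ‖psi w‖ ≤ (1 - w) * (2 * |Real.cos (π * w)|) + 1 / (3 * π) * 2 := by
    unfold psi
    calc ‖_‖ ≤ _ + _ := norm_add_le _ _
      _ ≤ (1 - w) * (2 * |Real.cos (π * w)|) + 1 / (3 * π) * 2 := by rw [h1]; exact add_le_add_right h2 _
  have hnum : 2 / 3 + 1 / (3 * π) * 2 ≤ 2 - π ^ 2 / 9 := by
    have hπ1 : π < 3.15 := Real.pi_lt_d2
    have hπ2 : 3.141592 < π := Real.pi_gt_d6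
    have : 1 / (3 * π) ≤ 1 / (3 * 3.141592) := by
      apply one_div_le_one_div_of_le <;> nlinarith
    nlinarith
  linarith
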